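/- Suppose every Q ∈ 𝐐 satisfies instrument exogeneity and generalized monotonicity, 𝐐 satisfies unrestricted potential outcomes, and 𝐐' is any set of latent distributions with 𝐐 ⊆ 𝐐' ⊆ 𝐐*_{MI}. Then for any P with P{Z = z} > 0 for all z ∈ 𝒵 and 𝐐₀(P, 𝐐) ≠ ∅, one has Θ₀(P, 𝐐) = Θ₀(P, 𝐐') = Θ₀(P, 𝐐*_{MI}). -/

import Mathlib

open Finset

/-- A probability mass function on a finite type. -/
structure ProbMass (α : Type) [Fintype α] where
  mass : α → ℝ
  nonneg : ∀ a, 0 ≤ mass a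
  total : ∑ a, mass a = 1

/-- Probability of an event under a probability mass function. -/
noncomputable def pr {α : Type} [Fintype α] (Q : ProbMass α) (A : Set α) : ℝ :=
  ∑ a, A.indicator Q.mass a

/-- Expectation of a real-valued function under a probability mass function. -/
noncomputable def expect {α : Type} [Fintype α] (Q : ProbMass α) (f : α → ℝ) : ℝ :=
  ∑ a, Q.mass a * f a

/-- The latent space: potential outcomes `(Y_d)_{d ∈ D}` taking values in the finite set
`𝒴 ⊂ ℝ`, potential treatments `(D_z)_{z ∈ Z}`, and the instrument `Z`. -/
abbrev Latent (𝒴 : Finset ℝ) (D Z : Type) : Type := (D → ↥𝒴) × (Z → D) × Z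

/-- The observed space: `(Y, D, Z)`. -/
abbrev Obs (𝒴 : Finset ℝ) (D Z : Type) : Type := ↥𝒴 × D × Z

variable {𝒴 : Finset ℝ} {D Z : Type} [Fintype D] [DecidableEq D] [Fintype Z] [DecidableEq Z]

/-- The map `T` sending `((y_d), (d_z), z)` to `(y_{d_z}, d_z, z)`. -/
def Tmap (ω : Latent 𝒴 D Z) : Obs 𝒴 D Z := (ω.1 (ω.2.1 ω.2.2), ω.2.1 ω.2.2, ω.2.2)

/-- `Q` rationalizes `P`: `P = Q ∘ T⁻¹`. -/
def Rationalizes (Q : ProbMass (Latent 𝒴 D Z)) (P : ProbMass (Obs 𝒴 D Z)) : Prop :=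
  ∀ o : Obs 𝒴 D Z, P.mass o = pr Q {ω | Tmap ω = o}

/-- Instrument exogeneity: `((Y_d), (D_z))` is independent of `Z` under `Q`. -/
def Exog (Q : ProbMass (Latent 𝒴 D Z)) : Prop :=
  ∀ (yd : D → ↥𝒴) (dz : Z → D) (z : Z),
    pr Q {ω | ω.1 = yd ∧ ω.2.1 = dz ∧ ω.2.2 = z}
      = pr Q {ω | ω.1 = yd ∧ ω.2.1 = dz} * pr Q {ω | ω.2.2 = z}

/-- `zs` maximally encourages treatment `d` under `Q`:
`Q{D_{zs} ≠ d and D_{z'} = d for some z'} = 0`. -/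
def MaxEnc (Q : ProbMass (Latent 𝒴 D Z)) (d : D) (zs : Z) : Prop :=
  pr Q {ω | ω.2.1 zs ≠ d ∧ ∃ z' : Z, ω.2.1 z' = d} = 0

/-- Generalized monotonicity. -/
def GenMono (Q : ProbMass (Latent 𝒴 D Z)) : Prop :=
  ∀ d : D, ∃ zs : Z, MaxEnc Q d zs

/-- `θ(Q) = (E_Q[Y_d])_{d ∈ D}`, the vector of average potential outcomes. -/
noncomputable def theta (Q : ProbMass (Latent 𝒴 D Z)) : D → ℝ :=
  fun d => expect Q fun ω => (ω.1 d : ℝ)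

/-- `𝐐₀(P, 𝐐)`: the set of `Q ∈ 𝐐` that rationalize `P`. -/
def Q0 (P : ProbMass (Obs 𝒴 D Z)) (QQ : Set (ProbMass (Latent 𝒴 D Z))) :
    Set (ProbMass (Latent 𝒴 D Z)) :=
  {Q | Q ∈ QQ ∧ Rationalizes Q P}

/-- `Θ₀(P, 𝐐)`: the identified set for `θ(Q)`. -/
noncomputable def Theta0 (P : ProbMass (Obs 𝒴 D Z))
    (QQ : Set (ProbMass (Latent 𝒴 D Z))) : Set (D → ℝ) :=
  theta '' Q0 P QQ

/-- Unrestricted potential outcomes: if `Q ∈ 𝐐`, `Q'` is exogenous, and the potential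
treatments have the same distribution under `Q'` as under `Q`, then `Q' ∈ 𝐐`. -/
def UnrestrictedPO (QQ : Set (ProbMass (Latent 𝒴 D Z))) : Prop :=
  ∀ Q ∈ QQ, ∀ Q' : ProbMass (Latent 𝒴 D Z), Exog Q' →
    (∀ dz : Z → D, pr Q' {ω | ω.2.1 = dz} = pr Q {ω | ω.2.1 = dz}) → Q' ∈ QQ

/-- `P{Z = z}`. -/
noncomputable def prZ (P : ProbMass (Obs 𝒴 D Z)) (z : Z) : ℝ :=
  pr P {o | o.2.2 = z}

/-- `P{D = d ∣ Z = z}`. -/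
noncomputable def condD (P : ProbMass (Obs 𝒴 D Z)) (d : D) (z : Z) : ℝ :=
  pr P {o | o.2.1 = d ∧ o.2.2 = z} / prZ P z

/-- `p_{yd|z} = P{Y = y, D = d ∣ Z = z}`. -/
noncomputable def pObs (P : ProbMass (Obs 𝒴 D Z)) (y : ℝ) (d : D) (z : Z) : ℝ :=
  pr P {o | (o.1 : ℝ) = y ∧ o.2.1 = d ∧ o.2.2 = z} / prZ P z

/-- `β_{d|z} = E_P[Y · 1{D = d} ∣ Z = z]`. -/
noncomputable def betaObs (P : ProbMass (Obs 𝒴 D Z)) (d : D) (z : Z) : ℝ :=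
  (expect P fun o => if o.2.1 = d ∧ o.2.2 = z then (o.1 : ℝ) else 0) / prZ P z

/-- Mean independence: `E_Q[Y_d ∣ Z = z] = E_Q[Y_d]` for all `d` and all `z` with
`Q{Z = z} > 0`. -/
def MeanIndep {𝒴 : Finset ℝ} {D Z : Type} [Fintype D] [DecidableEq D]
    [Fintype Z] [DecidableEq Z] (Q : ProbMass (Latent 𝒴 D Z)) : Prop :=
  ∀ (d : D) (z : Z), 0 < pr Q {ω | ω.2.2 = z} →
    (expect Q fun ω => if ω.2.2 = z then (ω.1 d : ℝ) else 0) / pr Q {ω | ω.2.2 = z}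
      = theta Q d

section Helpers

open Classical

lemma pr_eq_sum_ite {α : Type} [Fintype α] (Q : ProbMass α) (A : Set α) :
    pr Q A = ∑ a, if a ∈ A then Q.mass a else 0 := by
  unfold pr
  refine Finset.sum_congr rfl fun a _ => ?_
  rw [Set.indicator_apply]

lemma pr_nonneg {α : Type} [Fintype α] (Q : ProbMass α) (A : Set α) : 0 ≤ pr Q A := by
  rw [pr_eq_sum_ite]
  exact Finset.sum_nonneg fun a _ => by split <;> simp [Q.nonneg a]

lemma pr_mono {α : Type} [Fintype α] (Q : ProbMass α) {A B : Set α} (h : A ⊆ B) :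
    pr Q A ≤ pr Q B := by
  rw [pr_eq_sum_ite, pr_eq_sum_ite]
  refine Finset.sum_le_sum fun a _ => ?_
  by_cases ha : a ∈ A
  · simp [ha, h ha]
  · simp only [ha, if_false]
    split <;> simp [Q.nonneg a]

lemma mass_zero_of_pr_zero {α : Type} [Fintype α] (Q : ProbMass α) {A : Set α}
    (h : pr Q A = 0) {a : α} (ha : a ∈ A) : Q.mass a = 0 := by
  rw [pr_eq_sum_ite] at h
  have := (Finset.sum_eq_zero_iff_of_nonneg (fun a _ => by
    split <;> simp [Q.nonneg a])).1 h a (Finset.mem_univ a)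
  simpa [ha] using this

lemma expect_push {Q : ProbMass (Latent 𝒴 D Z)} {P : ProbMass (Obs 𝒴 D Z)}
    (h : Rationalizes Q P) (f : Obs 𝒴 D Z → ℝ) :
    expect P f = expect Q fun ω => f (Tmap ω) := by
  unfold _root_.expect
  calc ∑ o, P.mass o * f o = ∑ o, (∑ ω, if Tmap ω = o then Q.mass ω else 0) * f o := by
        refine Finset.sum_congr rfl fun o _ => ?_
        rw [h o, pr_eq_sum_ite]
        congr 1
        exact Finset.sum_congr rfl fun a _ => by
          by_cases h : Tmap a = o <;> simp [h]
    _ = ∑ o, ∑ ω, (if Tmap ω = o then Q.mass ω * f o else 0) := by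
        refine Finset.sum_congr rfl fun o _ => ?_
        rw [Finset.sum_mul]
        refine Finset.sum_congr rfl fun ω _ => ?_
        split <;> simp
    _ = ∑ ω, ∑ o, (if Tmap ω = o then Q.mass ω * f o else 0) := Finset.sum_comm
    _ = ∑ ω, Q.mass ω * f (Tmap ω) := by
        refine Finset.sum_congr rfl fun ω _ => ?_
        rw [Finset.sum_ite_eq Finset.univ (Tmap ω) (fun o => Q.mass ω * f o)]
        simp

lemma pr_eq_expect {α : Type} [Fintype α] (Q : ProbMass α) (A : Set α) :
    pr Q A = expect Q fun a => if a ∈ A then (1:ℝ) else 0 := by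
  rw [pr_eq_sum_ite]
  unfold _root_.expect
  refine Finset.sum_congr rfl fun a _ => ?_
  by_cases h : a ∈ A <;> simp [h]

lemma pr_push {Q : ProbMass (Latent 𝒴 D Z)} {P : ProbMass (Obs 𝒴 D Z)}
    (h : Rationalizes Q P) (A : Set (Obs 𝒴 D Z)) :
    pr P A = pr Q (Tmap ⁻¹' A) := by
  rw [pr_eq_expect, pr_eq_expect, expect_push h]
  rfl

end Helpers
section Helpers2

open Classical

lemma sum_ite_iff {α : Type} [Fintype α] [DecidableEq α] (f : α → ℝ) (b : α)
    (p : α → Prop) [DecidablePred p] (hp : ∀ a, p a ↔ a = b) :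
    (∑ a, if p a then f a else 0) = f b := by
  have h : ∀ a, (if p a then f a else 0) = (if a = b then f a else 0) := fun a => by
    by_cases h : a = b
    · rw [if_pos ((hp a).2 h), if_pos h]
    · rw [if_neg (fun hpa => h ((hp a).1 hpa)), if_neg h]
  rw [Finset.sum_congr rfl fun a _ => h a, Finset.sum_ite_eq' Finset.univ b f]
  simp

lemma pr_cond {α : Type} [Fintype α] (Q : ProbMass α) (p : α → Prop) [DecidablePred p] :
    pr Q {a | p a} = ∑ a, if p a then Q.mass a else 0 := by
  rw [pr_eq_sum_ite]
  exact Finset.sum_congr rfl fun a _ => by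
    by_cases h : p a
    · exact (if_pos (show a ∈ {a | p a} from h)).trans (if_pos h).symm
    · exact (if_neg (show a ∉ {a | p a} from h)).trans (if_neg h).symm

lemma pr_congr {α : Type} [Fintype α] (Q : ProbMass α) {A B : Set α} (h : ∀ a, a ∈ A ↔ a ∈ B) :
    pr Q A = pr Q B := by
  rw [pr_eq_sum_ite, pr_eq_sum_ite]
  exact Finset.sum_congr rfl fun a _ => by by_cases ha : a ∈ A <;> simp [ha, (h a).symm, h a]

lemma pr_singleton {α : Type} [Fintype α] [DecidableEq α] (Q : ProbMass α) (A : Set α) (b : α)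
    (h : ∀ a, a ∈ A ↔ a = b) : pr Q A = Q.mass b := by
  rw [pr_eq_sum_ite]
  exact sum_ite_iff Q.mass b _ h

lemma sum_pr_fiber {α β : Type} [Fintype α] [Fintype β] [DecidableEq β]
    (Q : ProbMass α) (g : α → β) : ∑ b, pr Q {a | g a = b} = 1 := by
  have h1 : ∀ b, pr Q {a | g a = b} = ∑ a, if g a = b then Q.mass a else 0 := fun b => by
    rw [pr_eq_sum_ite]
    exact Finset.sum_congr rfl fun a _ => by by_cases h : g a = b <;> simp [h]
  rw [Finset.sum_congr rfl fun b _ => h1 b, Finset.sum_comm]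
  have h2 : ∀ a : α, (∑ b, if g a = b then Q.mass a else 0) = Q.mass a := fun a => by
    rw [Finset.sum_ite_eq Finset.univ (g a) (fun _ => Q.mass a)]
    simp
  rw [Finset.sum_congr rfl fun a _ => h2 a, Q.total]

lemma pr_fiber_eq_sum_ite {α β : Type} [Fintype α] [Fintype β] [DecidableEq β]
    (Q : ProbMass α) (g : α → β) (b : β) :
    pr Q {a | g a = b} = ∑ a, if g a = b then Q.mass a else 0 := by
  rw [pr_eq_sum_ite]
  exact Finset.sum_congr rfl fun a _ => by by_cases h : g a = b <;> simp [h]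

end Helpers2
section Helpers3

open Classical

variable {𝒴 : Finset ℝ} {D Z : Type} [Fintype D] [DecidableEq D] [Fintype Z] [DecidableEq Z]

lemma expect_congr {α : Type} [Fintype α] (Q : ProbMass α) {f g : α → ℝ}
    (h : ∀ a, f a = g a) : expect Q f = expect Q g := by
  unfold _root_.expect
  exact Finset.sum_congr rfl fun a _ => by rw [h a]

lemma expect_eq_triple (Q : ProbMass (Latent 𝒴 D Z)) (f : Latent 𝒴 D Z → ℝ) :
    expect Q f = ∑ yd : D → ↥𝒴, ∑ dz : Z → D, ∑ z : Z, Q.mass (yd, dz, z) * f (yd, dz, z) := by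
  unfold _root_.expect
  rw [Fintype.sum_prod_type]
  exact Finset.sum_congr rfl fun yd _ => by rw [Fintype.sum_prod_type]

lemma pr_marg_ydz (Q : ProbMass (Latent 𝒴 D Z)) (yd : D → ↥𝒴) (dz : Z → D) :
    pr Q {ω | ω.1 = yd ∧ ω.2.1 = dz} = ∑ z, Q.mass (yd, dz, z) := by
  rw [pr_cond Q (fun ω : Latent 𝒴 D Z => ω.1 = yd ∧ ω.2.1 = dz), Fintype.sum_prod_type]
  refine Eq.trans (Finset.sum_congr rfl fun a _ => ?_)
    (sum_ite_iff (fun a => ∑ z, Q.mass (a, dz, z)) yd _ (fun a => Iff.rfl))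
  by_cases ha : a = yd
  · rw [if_pos ha]
    subst ha
    rw [Fintype.sum_prod_type, Finset.sum_comm]
    refine Finset.sum_congr rfl fun z _ => ?_
    exact sum_ite_iff (fun b => Q.mass (a, b, z)) dz _ (fun b => by simp)
  · rw [if_neg ha]
    exact Finset.sum_eq_zero fun p _ => if_neg (by simp [ha])

lemma pr_marg_dz (Q : ProbMass (Latent 𝒴 D Z)) (dz : Z → D) :
    pr Q {ω | ω.2.1 = dz} = ∑ yd, ∑ z, Q.mass (yd, dz, z) := by
  rw [pr_fiber_eq_sum_ite Q (fun ω => ω.2.1) dz, Fintype.sum_prod_type]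
  refine Finset.sum_congr rfl fun yd _ => ?_
  rw [Fintype.sum_prod_type, Finset.sum_comm]
  refine Finset.sum_congr rfl fun z _ => ?_
  exact sum_ite_iff (fun b => Q.mass (yd, b, z)) dz _ (fun b => Iff.rfl)

lemma pr_marg_z (Q : ProbMass (Latent 𝒴 D Z)) (z : Z) :
    pr Q {ω | ω.2.2 = z} = ∑ yd, ∑ dz, Q.mass (yd, dz, z) := by
  rw [pr_fiber_eq_sum_ite Q (fun ω => ω.2.2) z, Fintype.sum_prod_type]
  refine Finset.sum_congr rfl fun yd _ => ?_
  rw [Fintype.sum_prod_type]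
  refine Finset.sum_congr rfl fun dz _ => ?_
  exact sum_ite_iff (fun z' => Q.mass (yd, dz, z')) z _ (fun z' => Iff.rfl)

lemma exog_mass {Q : ProbMass (Latent 𝒴 D Z)} (hE : Exog Q) (yd : D → ↥𝒴) (dz : Z → D) (z : Z) :
    Q.mass (yd, dz, z) = (∑ z', Q.mass (yd, dz, z')) * pr Q {ω | ω.2.2 = z} := by
  have h := hE yd dz z
  rw [pr_singleton Q _ (yd, dz, z) (fun a => by
    simp only [Set.mem_setOf_eq, Prod.ext_iff]; try tauto)] at h
  rw [pr_marg_ydz] at h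
  exact h

lemma expect_marg (Q : ProbMass (Latent 𝒴 D Z)) (g : (D → ↥𝒴) → (Z → D) → ℝ) :
    (expect Q fun ω => g ω.1 ω.2.1)
      = ∑ yd, ∑ dz, (∑ z', Q.mass (yd, dz, z')) * g yd dz := by
  rw [expect_eq_triple]
  refine Finset.sum_congr rfl fun yd _ => ?_
  refine Finset.sum_congr rfl fun dz _ => ?_
  rw [Finset.sum_mul]

lemma exog_expect {Q : ProbMass (Latent 𝒴 D Z)} (hE : Exog Q)
    (g : (D → ↥𝒴) → (Z → D) → ℝ) (z : Z) :
    (∑ yd, ∑ dz, Q.mass (yd, dz, z) * g yd dz)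
      = (expect Q fun ω => g ω.1 ω.2.1) * pr Q {ω | ω.2.2 = z} := by
  rw [expect_marg, Finset.sum_mul]
  refine Finset.sum_congr rfl fun yd _ => ?_
  rw [Finset.sum_mul]
  refine Finset.sum_congr rfl fun dz _ => ?_
  rw [exog_mass hE yd dz z]
  ring

lemma exog_cond_expect {Q : ProbMass (Latent 𝒴 D Z)} (hE : Exog Q)
    (g : (D → ↥𝒴) → (Z → D) → ℝ) (z : Z) :
    expect Q (fun ω => if ω.2.2 = z then g ω.1 ω.2.1 else 0)
      = (expect Q fun ω => g ω.1 ω.2.1) * pr Q {ω | ω.2.2 = z} := by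
  rw [expect_eq_triple, ← exog_expect hE g z]
  refine Finset.sum_congr rfl fun yd _ => ?_
  refine Finset.sum_congr rfl fun dz _ => ?_
  have h : ∀ z' : Z, Q.mass (yd, dz, z') * (if z' = z then g yd dz else 0)
      = (if z' = z then Q.mass (yd, dz, z') * g yd dz else 0) := fun z' => by
    by_cases h : z' = z <;> simp [h]
  calc (∑ z' : Z, Q.mass (yd, dz, z') * (if z' = z then g yd dz else 0))
      = ∑ z' : Z, (if z' = z then Q.mass (yd, dz, z') * g yd dz else 0) :=
        Finset.sum_congr rfl fun z' _ => h z'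
    _ = Q.mass (yd, dz, z) * g yd dz := by
        rw [Finset.sum_ite_eq' Finset.univ z (fun z' => Q.mass (yd, dz, z') * g yd dz)]
        simp

lemma exog_cond_pr {Q : ProbMass (Latent 𝒴 D Z)} (hE : Exog Q)
    (p : (D → ↥𝒴) → (Z → D) → Prop) (z : Z) :
    pr Q {ω | p ω.1 ω.2.1 ∧ ω.2.2 = z}
      = pr Q {ω | p ω.1 ω.2.1} * pr Q {ω | ω.2.2 = z} := by
  have e1 : pr Q {ω | p ω.1 ω.2.1 ∧ ω.2.2 = z}
      = expect Q (fun ω => if ω.2.2 = z then (if p ω.1 ω.2.1 then (1:ℝ) else 0) else 0) := by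
    rw [pr_eq_expect]
    refine expect_congr Q fun a => ?_
    by_cases h1 : p a.1 a.2.1 <;> by_cases h2 : a.2.2 = z <;>
      simp [h1, h2, Set.mem_setOf_eq]
  have e2 : pr Q {ω | p ω.1 ω.2.1}
      = expect Q (fun ω => if p ω.1 ω.2.1 then (1:ℝ) else 0) := by
    rw [pr_eq_expect]
    refine expect_congr Q fun a => ?_
    by_cases h1 : p a.1 a.2.1 <;> simp [h1, Set.mem_setOf_eq]
  rw [e1, e2, exog_cond_expect hE (fun a b => if p a b then (1:ℝ) else 0) z]

end Helpers3
section Construction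

open Classical

variable {𝒴 : Finset ℝ} {D Z : Type} [Fintype D] [DecidableEq D] [Fintype Z] [DecidableEq Z]

/-- Joint law of `(Y_d, (D_z))` under `Q0`. -/
noncomputable def nuQ (Q0 : ProbMass (Latent 𝒴 D Z)) (d : D) (y : ↥𝒴) (dz : Z → D) : ℝ :=
  pr Q0 {ω | ω.1 d = y ∧ ω.2.1 = dz}

/-- Law of the treatment profile `(D_z)` under `Q0`. -/
noncomputable def muQ (Q0 : ProbMass (Latent 𝒴 D Z)) (dz : Z → D) : ℝ :=
  pr Q0 {ω | ω.2.1 = dz}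

lemma nuQ_nonneg (Q0 : ProbMass (Latent 𝒴 D Z)) (d : D) (y : ↥𝒴) (dz : Z → D) :
    0 ≤ nuQ Q0 d y dz := pr_nonneg _ _

lemma muQ_nonneg (Q0 : ProbMass (Latent 𝒴 D Z)) (dz : Z → D) : 0 ≤ muQ Q0 dz := pr_nonneg _ _

lemma nuQ_le_muQ (Q0 : ProbMass (Latent 𝒴 D Z)) (d : D) (y : ↥𝒴) (dz : Z → D) :
    nuQ Q0 d y dz ≤ muQ Q0 dz :=
  pr_mono Q0 fun ω hω => hω.2

lemma nuQ_eq_zero (Q0 : ProbMass (Latent 𝒴 D Z)) {d : D} {y : ↥𝒴} {dz : Z → D}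
    (h : muQ Q0 dz = 0) : nuQ Q0 d y dz = 0 :=
  le_antisymm (h ▸ nuQ_le_muQ Q0 d y dz) (nuQ_nonneg Q0 d y dz)

lemma sum_nuQ (Q0 : ProbMass (Latent 𝒴 D Z)) (d : D) (dz : Z → D) :
    ∑ y, nuQ Q0 d y dz = muQ Q0 dz := by
  unfold nuQ muQ
  have h1 : ∀ y : ↥𝒴, pr Q0 {ω | ω.1 d = y ∧ ω.2.1 = dz}
      = ∑ ω, if ω.1 d = y ∧ ω.2.1 = dz then Q0.mass ω else 0 := fun y =>
    pr_cond Q0 (fun ω : Latent 𝒴 D Z => ω.1 d = y ∧ ω.2.1 = dz)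
  rw [Finset.sum_congr rfl fun y _ => h1 y, Finset.sum_comm,
    pr_cond Q0 (fun ω : Latent 𝒴 D Z => ω.2.1 = dz)]
  refine Finset.sum_congr rfl fun ω _ => ?_
  by_cases h : ω.2.1 = dz
  · rw [if_pos h]
    exact sum_ite_iff (fun _ => Q0.mass ω) (ω.1 d) _ (fun y => by simp [h, eq_comm])
  · rw [if_neg h]
    exact Finset.sum_eq_zero fun y _ => if_neg (by simp [h])

/-- Sum of `Y_d`-weighted joint masses equals a latent expectation. -/
lemma sum_nuQ_y (Q0 : ProbMass (Latent 𝒴 D Z)) (d : D) (dz : Z → D) :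
    ∑ y, nuQ Q0 d y dz * (y : ℝ)
      = ∑ ω, (if ω.2.1 = dz then Q0.mass ω * (ω.1 d : ℝ) else 0) := by
  unfold nuQ
  have h1 : ∀ y : ↥𝒴, pr Q0 {ω | ω.1 d = y ∧ ω.2.1 = dz} * (y : ℝ)
      = ∑ ω, (if ω.1 d = y ∧ ω.2.1 = dz then Q0.mass ω * (y : ℝ) else 0) := fun y => by
    rw [pr_cond Q0 (fun ω : Latent 𝒴 D Z => ω.1 d = y ∧ ω.2.1 = dz), Finset.sum_mul]
    refine Finset.sum_congr rfl fun ω _ => ?_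
    by_cases h : ω.1 d = y ∧ ω.2.1 = dz
    · rw [if_pos h, if_pos h]
    · rw [if_neg h, if_neg h, zero_mul]
  rw [Finset.sum_congr rfl fun y _ => h1 y, Finset.sum_comm]
  refine Finset.sum_congr rfl fun ω _ => ?_
  by_cases h : ω.2.1 = dz
  · rw [if_pos h]
    refine Eq.trans ?_ (sum_ite_iff (fun y : ↥𝒴 => Q0.mass ω * (y : ℝ)) (ω.1 d) _
      (fun y => Iff.rfl))
    refine Finset.sum_congr rfl fun y _ => ?_
    by_cases h2 : ω.1 d = y
    · rw [if_pos ⟨h2, h⟩, if_pos h2.symm]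
    · rw [if_neg (by tauto), if_neg (fun hy => h2 hy.symm)]
  · rw [if_neg h]
    exact Finset.sum_eq_zero fun y _ => if_neg (by tauto)

lemma sum_muQ (Q0 : ProbMass (Latent 𝒴 D Z)) : ∑ dz, muQ Q0 dz = 1 :=
  sum_pr_fiber Q0 (fun ω => ω.2.1)

lemma sum_prZ (P : ProbMass (Obs 𝒴 D Z)) : ∑ z, prZ P z = 1 :=
  sum_pr_fiber P (fun o => o.2.2)

/-- Two-point distribution with weight `l` on `yM` and `1 - l` on `ym`. -/
noncomputable def rhoPM (ym yM : ↥𝒴) (l : ℝ) (y : ↥𝒴) : ℝ :=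
  (if y = yM then l else 0) + (if y = ym then 1 - l else 0)

lemma rhoPM_nonneg {ym yM : ↥𝒴} {l : ℝ} (h0 : 0 ≤ l) (h1 : l ≤ 1) (y : ↥𝒴) :
    0 ≤ rhoPM ym yM l y := by
  unfold rhoPM
  have : (0:ℝ) ≤ 1 - l := by linarith
  positivity

lemma sum_rhoPM {ym yM : ↥𝒴} (h : ym ≠ yM) (l : ℝ) : ∑ y, rhoPM ym yM l y = 1 := by
  unfold rhoPM
  rw [Finset.sum_add_distrib,
    Finset.sum_ite_eq' Finset.univ yM (fun _ => l),
    Finset.sum_ite_eq' Finset.univ ym (fun _ => 1 - l)]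
  simp

lemma mean_rhoPM {ym yM : ↥𝒴} (h : ym ≠ yM) (l : ℝ) :
    ∑ y, rhoPM ym yM l y * (y : ℝ) = l * (yM : ℝ) + (1 - l) * (ym : ℝ) := by
  unfold rhoPM
  have h1 : ∀ y : ↥𝒴, ((if y = yM then l else 0) + (if y = ym then 1 - l else 0)) * (y : ℝ)
      = (if y = yM then l * (yM : ℝ) else 0) + (if y = ym then (1 - l) * (ym : ℝ) else 0) := by
    intro y
    by_cases hM : y = yM
    · have hne : yM ≠ ym := fun he => h he.symm
      subst hM
      rw [if_pos rfl, if_pos rfl, if_neg hne, if_neg hne]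
      ring
    · by_cases hm : y = ym
      · subst hm
        rw [if_neg hM, if_neg hM, if_pos rfl, if_pos rfl]
        ring
      · simp [hM, hm]
  rw [Finset.sum_congr rfl fun y _ => h1 y, Finset.sum_add_distrib,
    Finset.sum_ite_eq' Finset.univ yM (fun _ => l * (yM : ℝ)),
    Finset.sum_ite_eq' Finset.univ ym (fun _ => (1 - l) * (ym : ℝ))]
  simp

end Construction
section Construction2

open Classical

variable {𝒴 : Finset ℝ} {D Z : Type} [Fintype D] [DecidableEq D] [Fintype Z] [DecidableEq Z]

/-- Conditional law of the constructed potential outcome `Y_d` given treatment profile. -/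
noncomputable def kapQ (Q0 : ProbMass (Latent 𝒴 D Z)) (ym yM : ↥𝒴) (l : D → ℝ)
    (d : D) (dz : Z → D) (y : ↥𝒴) : ℝ :=
  if muQ Q0 dz = 0 then (if y = ym then 1 else 0)
  else if ∃ z', dz z' = d then nuQ Q0 d y dz / muQ Q0 dz
  else rhoPM ym yM (l d) y

lemma kapQ_nonneg (Q0 : ProbMass (Latent 𝒴 D Z)) (ym yM : ↥𝒴) {l : D → ℝ}
    (hl : ∀ d, 0 ≤ l d ∧ l d ≤ 1) (d : D) (dz : Z → D) (y : ↥𝒴) :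
    0 ≤ kapQ Q0 ym yM l d dz y := by
  unfold kapQ
  split_ifs with h1 h2 h3
  · exact zero_le_one
  · exact le_refl 0
  · exact div_nonneg (nuQ_nonneg Q0 d y dz) (muQ_nonneg Q0 dz)
  · exact rhoPM_nonneg (hl d).1 (hl d).2 y

lemma kapQ_sum (Q0 : ProbMass (Latent 𝒴 D Z)) {ym yM : ↥𝒴} (hym : ym ≠ yM) (l : D → ℝ)
    (d : D) (dz : Z → D) : ∑ y, kapQ Q0 ym yM l d dz y = 1 := by
  unfold kapQ
  by_cases h1 : muQ Q0 dz = 0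
  · rw [Finset.sum_congr rfl fun y _ => if_pos h1]
    rw [Finset.sum_ite_eq' Finset.univ ym (fun _ => (1:ℝ))]
    simp
  · rw [Finset.sum_congr rfl fun y _ => if_neg h1]
    by_cases h2 : ∃ z', dz z' = d
    · rw [Finset.sum_congr rfl fun y _ => if_pos h2]
      rw [← Finset.sum_div, sum_nuQ, div_self h1]
    · rw [Finset.sum_congr rfl fun y _ => if_neg h2]
      exact sum_rhoPM hym (l d)

lemma muQ_mul_kapQ_sel (Q0 : ProbMass (Latent 𝒴 D Z)) (ym yM : ↥𝒴) (l : D → ℝ)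
    {d : D} {dz : Z → D} (hsel : ∃ z', dz z' = d) (y : ↥𝒴) :
    muQ Q0 dz * kapQ Q0 ym yM l d dz y = nuQ Q0 d y dz := by
  unfold kapQ
  by_cases h1 : muQ Q0 dz = 0
  · rw [h1, zero_mul, nuQ_eq_zero Q0 h1]
  · rw [if_neg h1, if_pos hsel, mul_div_cancel₀ _ h1]

lemma kapQ_mean_nonsel (Q0 : ProbMass (Latent 𝒴 D Z)) {ym yM : ↥𝒴} (hym : ym ≠ yM)
    (l : D → ℝ) {d : D} {dz : Z → D} (hns : ¬ ∃ z', dz z' = d) (h1 : muQ Q0 dz ≠ 0) :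
    ∑ y, kapQ Q0 ym yM l d dz y * (y : ℝ)
      = l d * (yM : ℝ) + (1 - l d) * (ym : ℝ) := by
  unfold kapQ
  rw [Finset.sum_congr rfl fun y _ => by rw [if_neg h1, if_neg hns]]
  exact mean_rhoPM hym (l d)

/-- Sum over potential-outcome vectors of a product factorizes. -/
lemma pi_sum (f : D → ↥𝒴 → ℝ) :
    ∑ yd : D → ↥𝒴, ∏ d, f d (yd d) = ∏ d, ∑ y, f d y := by
  rw [Finset.prod_univ_sum]
  rw [← Fintype.piFinset_univ]

/-- Sum over potential-outcome vectors of a product times a single-coordinate weight. -/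
lemma pi_sum_single (f : D → ↥𝒴 → ℝ) (hf : ∀ d, ∑ y, f d y = 1) (d0 : D) (w : ↥𝒴 → ℝ) :
    ∑ yd : D → ↥𝒴, (∏ d, f d (yd d)) * w (yd d0) = ∑ y, f d0 y * w y := by
  have h1 : ∀ yd : D → ↥𝒴, (∏ d, f d (yd d)) * w (yd d0)
      = ∏ d, (f d (yd d) * (if d = d0 then w (yd d) else 1)) := by
    intro yd
    rw [Finset.prod_mul_distrib, Finset.prod_ite_eq' Finset.univ d0 (fun d => w (yd d))]
    simp
  rw [Finset.sum_congr rfl fun yd _ => h1 yd,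
    pi_sum (fun d y => f d y * (if d = d0 then w y else 1))]
  rw [← Finset.mul_prod_erase Finset.univ _ (Finset.mem_univ d0)]
  have h2 : ∀ d ∈ Finset.univ.erase d0, (∑ y, f d y * (if d = d0 then w y else 1)) = 1 := by
    intro d hd
    have hne : d ≠ d0 := (Finset.mem_erase.1 hd).1
    rw [Finset.sum_congr rfl fun y _ => by rw [if_neg hne, mul_one]]
    exact hf d
  rw [Finset.prod_congr rfl h2, Finset.prod_const_one, mul_one]
  refine Finset.sum_congr rfl fun y _ => by rw [if_pos rfl]

end Construction2
section Qstar

open Classical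

variable {𝒴 : Finset ℝ} {D Z : Type} [Fintype D] [DecidableEq D] [Fintype Z] [DecidableEq Z]

lemma sum_triple (f : Latent 𝒴 D Z → ℝ) :
    ∑ ω, f ω = ∑ yd : D → ↥𝒴, ∑ dz : Z → D, ∑ z : Z, f (yd, dz, z) := by
  rw [Fintype.sum_prod_type]
  exact Finset.sum_congr rfl fun yd _ => by rw [Fintype.sum_prod_type]

/-- The mass function of the constructed latent distribution. -/
noncomputable def QstarMass (P : ProbMass (Obs 𝒴 D Z)) (Q0 : ProbMass (Latent 𝒴 D Z))
    (ym yM : ↥𝒴) (l : D → ℝ) (ω : Latent 𝒴 D Z) : ℝ :=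
  prZ P ω.2.2 * (muQ Q0 ω.2.1 * ∏ d, kapQ Q0 ym yM l d ω.2.1 (ω.1 d))

lemma sum_pi_kap (Q0 : ProbMass (Latent 𝒴 D Z)) {ym yM : ↥𝒴} (hym : ym ≠ yM)
    (l : D → ℝ) (dz : Z → D) :
    ∑ yd : D → ↥𝒴, ∏ d, kapQ Q0 ym yM l d dz (yd d) = 1 := by
  rw [pi_sum (fun d y => kapQ Q0 ym yM l d dz y)]
  rw [Finset.prod_congr rfl fun d _ => kapQ_sum Q0 hym l d dz, Finset.prod_const_one]

lemma QstarMass_total (P : ProbMass (Obs 𝒴 D Z)) (Q0 : ProbMass (Latent 𝒴 D Z))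
    {ym yM : ↥𝒴} (hym : ym ≠ yM) (l : D → ℝ) :
    ∑ ω, QstarMass P Q0 ym yM l ω = 1 := by
  rw [sum_triple]
  unfold QstarMass
  have h1 : ∀ (yd : D → ↥𝒴) (dz : Z → D),
      (∑ z, prZ P z * (muQ Q0 dz * ∏ d, kapQ Q0 ym yM l d dz (yd d)))
        = muQ Q0 dz * ∏ d, kapQ Q0 ym yM l d dz (yd d) := by
    intro yd dz
    rw [← Finset.sum_mul, sum_prZ, one_mul]
  rw [Finset.sum_congr rfl fun yd _ => Finset.sum_congr rfl fun dz _ => h1 yd dz]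
  rw [Finset.sum_comm]
  have h2 : ∀ dz : Z → D,
      (∑ yd : D → ↥𝒴, muQ Q0 dz * ∏ d, kapQ Q0 ym yM l d dz (yd d)) = muQ Q0 dz := by
    intro dz
    rw [← Finset.mul_sum, sum_pi_kap Q0 hym l dz, mul_one]
  rw [Finset.sum_congr rfl fun dz _ => h2 dz, sum_muQ]

/-- The constructed latent distribution. -/
noncomputable def Qstar (P : ProbMass (Obs 𝒴 D Z)) (Q0 : ProbMass (Latent 𝒴 D Z))
    {ym yM : ↥𝒴} (hym : ym ≠ yM) {l : D → ℝ} (hl : ∀ d, 0 ≤ l d ∧ l d ≤ 1) :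
    ProbMass (Latent 𝒴 D Z) where
  mass := QstarMass P Q0 ym yM l
  nonneg ω := by
    unfold QstarMass
    refine mul_nonneg (pr_nonneg _ _) (mul_nonneg (muQ_nonneg _ _) ?_)
    exact Finset.prod_nonneg fun d _ => kapQ_nonneg Q0 ym yM hl d ω.2.1 (ω.1 d)
  total := QstarMass_total P Q0 hym l

lemma Qstar_prZ (P : ProbMass (Obs 𝒴 D Z)) (Q0 : ProbMass (Latent 𝒴 D Z))
    {ym yM : ↥𝒴} (hym : ym ≠ yM) {l : D → ℝ} (hl : ∀ d, 0 ≤ l d ∧ l d ≤ 1) (z : Z) :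
    pr (Qstar P Q0 hym hl) {ω | ω.2.2 = z} = prZ P z := by
  rw [pr_marg_z]
  show (∑ yd : D → ↥𝒴, ∑ dz : Z → D,
    prZ P z * (muQ Q0 dz * ∏ d, kapQ Q0 ym yM l d dz (yd d))) = prZ P z
  rw [Finset.sum_congr rfl fun yd _ => (Finset.mul_sum ..).symm, ← Finset.mul_sum]
  rw [Finset.sum_comm]
  rw [Finset.sum_congr rfl fun dz _ => by
    rw [← Finset.mul_sum, sum_pi_kap Q0 hym l dz, mul_one]]
  rw [sum_muQ, mul_one]

lemma Qstar_margdz (P : ProbMass (Obs 𝒴 D Z)) (Q0 : ProbMass (Latent 𝒴 D Z))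
    {ym yM : ↥𝒴} (hym : ym ≠ yM) {l : D → ℝ} (hl : ∀ d, 0 ≤ l d ∧ l d ≤ 1) (dz : Z → D) :
    pr (Qstar P Q0 hym hl) {ω | ω.2.1 = dz} = muQ Q0 dz := by
  rw [pr_marg_dz]
  show (∑ yd : D → ↥𝒴, ∑ z : Z,
    prZ P z * (muQ Q0 dz * ∏ d, kapQ Q0 ym yM l d dz (yd d))) = muQ Q0 dz
  rw [Finset.sum_congr rfl fun yd _ => by rw [← Finset.sum_mul, sum_prZ, one_mul]]
  rw [← Finset.mul_sum, sum_pi_kap Q0 hym l dz, mul_one]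

lemma Qstar_exog (P : ProbMass (Obs 𝒴 D Z)) (Q0 : ProbMass (Latent 𝒴 D Z))
    {ym yM : ↥𝒴} (hym : ym ≠ yM) {l : D → ℝ} (hl : ∀ d, 0 ≤ l d ∧ l d ≤ 1) :
    Exog (Qstar P Q0 hym hl) := by
  intro yd dz z
  rw [pr_singleton _ _ (yd, dz, z) (fun a => by
    simp only [Set.mem_setOf_eq, Prod.ext_iff]; try tauto)]
  rw [pr_marg_ydz, Qstar_prZ P Q0 hym hl z]
  show QstarMass P Q0 ym yM l (yd, dz, z)
    = (∑ z', QstarMass P Q0 ym yM l (yd, dz, z')) * prZ P z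
  unfold QstarMass
  show prZ P z * (muQ Q0 dz * ∏ d, kapQ Q0 ym yM l d dz (yd d))
    = (∑ z', prZ P z' * (muQ Q0 dz * ∏ d, kapQ Q0 ym yM l d dz (yd d))) * prZ P z
  rw [← Finset.sum_mul, sum_prZ, one_mul]
  ring

end Qstar
section QstarFacts

open Classical

variable {𝒴 : Finset ℝ} {D Z : Type} [Fintype D] [DecidableEq D] [Fintype Z] [DecidableEq Z]

lemma rationalizes_prZ {Q : ProbMass (Latent 𝒴 D Z)} {P : ProbMass (Obs 𝒴 D Z)}
    (hR : Rationalizes Q P) (z : Z) : pr Q {ω | ω.2.2 = z} = prZ P z := by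
  unfold prZ
  rw [pr_push hR]
  exact pr_congr Q fun a => Iff.rfl

lemma sum_sel_nu_fixed (Q0 : ProbMass (Latent 𝒴 D Z)) (d : D) (y : ↥𝒴) (z : Z) :
    (∑ dz : Z → D, if dz z = d then nuQ Q0 d y dz else 0)
      = pr Q0 {ω | ω.1 d = y ∧ ω.2.1 z = d} := by
  have h1 : ∀ dz : Z → D, (if dz z = d then nuQ Q0 d y dz else 0)
      = ∑ ω, (if ω.2.1 = dz then (if ω.1 d = y ∧ ω.2.1 z = d then Q0.mass ω else 0) else 0) := by
    intro dz
    by_cases hdz : dz z = d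
    · rw [if_pos hdz]
      unfold nuQ
      rw [pr_cond Q0 (fun ω : Latent 𝒴 D Z => ω.1 d = y ∧ ω.2.1 = dz)]
      refine Finset.sum_congr rfl fun ω _ => ?_
      by_cases h2 : ω.2.1 = dz
      · by_cases h3 : ω.1 d = y
        · rw [if_pos ⟨h3, h2⟩, if_pos h2, if_pos ⟨h3, by rw [h2]; exact hdz⟩]
        · rw [if_neg (by tauto), if_pos h2, if_neg (by tauto)]
      · rw [if_neg (by tauto), if_neg h2]
    · rw [if_neg hdz]
      symm
      refine Finset.sum_eq_zero fun ω _ => ?_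
      by_cases h2 : ω.2.1 = dz
      · rw [if_pos h2, if_neg (fun hc => hdz (by rw [← h2]; exact hc.2))]
      · rw [if_neg h2]
  rw [Finset.sum_congr rfl fun dz _ => h1 dz, Finset.sum_comm,
    pr_cond Q0 (fun ω : Latent 𝒴 D Z => ω.1 d = y ∧ ω.2.1 z = d)]
  refine Finset.sum_congr rfl fun ω _ => ?_
  exact sum_ite_iff (fun dz => if ω.1 d = y ∧ ω.2.1 z = d then Q0.mass ω else 0)
    ω.2.1 _ (fun dz => eq_comm)

lemma sum_sel_nu_y (Q0 : ProbMass (Latent 𝒴 D Z)) (d : D) :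
    (∑ dz : Z → D, if ∃ z', dz z' = d then (∑ y, nuQ Q0 d y dz * (y : ℝ)) else 0)
      = expect Q0 (fun ω => if ∃ z', ω.2.1 z' = d then (ω.1 d : ℝ) else 0) := by
  have h1 : ∀ dz : Z → D, (if ∃ z', dz z' = d then (∑ y, nuQ Q0 d y dz * (y : ℝ)) else 0)
      = ∑ ω, (if ω.2.1 = dz then
          (if ∃ z', ω.2.1 z' = d then Q0.mass ω * (ω.1 d : ℝ) else 0) else 0) := by
    intro dz
    by_cases hsel : ∃ z', dz z' = d
    · rw [if_pos hsel, sum_nuQ_y]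
      refine Finset.sum_congr rfl fun ω _ => ?_
      by_cases h2 : ω.2.1 = dz
      · rw [if_pos h2, if_pos h2, if_pos (by rw [h2]; exact hsel)]
      · rw [if_neg h2, if_neg h2]
    · rw [if_neg hsel]
      symm
      refine Finset.sum_eq_zero fun ω _ => ?_
      by_cases h2 : ω.2.1 = dz
      · rw [if_pos h2, if_neg (by rw [h2]; exact hsel)]
      · rw [if_neg h2]
  rw [Finset.sum_congr rfl fun dz _ => h1 dz, Finset.sum_comm]
  unfold _root_.expect
  refine Finset.sum_congr rfl fun ω _ => ?_
  rw [sum_ite_iff (fun dz => if ∃ z', ω.2.1 z' = d then Q0.mass ω * (ω.1 d : ℝ) else 0)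
    ω.2.1 _ (fun dz => eq_comm)]
  show (if ∃ z', ω.2.1 z' = d then Q0.mass ω * (ω.1 d : ℝ) else 0)
    = Q0.mass ω * (if ∃ z', ω.2.1 z' = d then (ω.1 d : ℝ) else 0)
  by_cases hsel : ∃ z', ω.2.1 z' = d
  · rw [if_pos hsel, if_pos hsel]
  · rw [if_neg hsel, if_neg hsel, mul_zero]

lemma sum_nonsel_mu (Q0 : ProbMass (Latent 𝒴 D Z)) (d : D) :
    (∑ dz : Z → D, if ∃ z', dz z' = d then 0 else muQ Q0 dz)
      = pr Q0 {ω | ¬ ∃ z', ω.2.1 z' = d} := by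
  have h1 : ∀ dz : Z → D, (if ∃ z', dz z' = d then 0 else muQ Q0 dz)
      = ∑ ω, (if ω.2.1 = dz then
          (if ¬ ∃ z', ω.2.1 z' = d then Q0.mass ω else 0) else 0) := by
    intro dz
    by_cases hsel : ∃ z', dz z' = d
    · rw [if_pos hsel]
      symm
      refine Finset.sum_eq_zero fun ω _ => ?_
      by_cases h2 : ω.2.1 = dz
      · rw [if_pos h2, if_neg (fun hc => hc (by rw [h2]; exact hsel))]
      · rw [if_neg h2]
    · rw [if_neg hsel]
      unfold muQ
      rw [pr_cond Q0 (fun ω : Latent 𝒴 D Z => ω.2.1 = dz)]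
      refine Finset.sum_congr rfl fun ω _ => ?_
      by_cases h2 : ω.2.1 = dz
      · rw [if_pos h2, if_pos h2, if_pos (by rw [h2]; exact hsel)]
      · rw [if_neg h2, if_neg h2]
  rw [Finset.sum_congr rfl fun dz _ => h1 dz, Finset.sum_comm,
    pr_cond Q0 (fun ω : Latent 𝒴 D Z => ¬ ∃ z', ω.2.1 z' = d)]
  refine Finset.sum_congr rfl fun ω _ => ?_
  exact sum_ite_iff (fun dz => if ¬ ∃ z', ω.2.1 z' = d then Q0.mass ω else 0)
    ω.2.1 _ (fun dz => eq_comm)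

lemma Tmap_eq_iff (y : ↥𝒴) (d : D) (z : Z) (ω : Latent 𝒴 D Z) :
    Tmap ω = (y, d, z) ↔ ((ω.1 d = y ∧ ω.2.1 z = d) ∧ ω.2.2 = z) := by
  constructor
  · intro h
    have h3 : ω.2.2 = z := congrArg (fun o : Obs 𝒴 D Z => o.2.2) h
    have h2 : ω.2.1 ω.2.2 = d := congrArg (fun o : Obs 𝒴 D Z => o.2.1) h
    have h1 : ω.1 (ω.2.1 ω.2.2) = y := congrArg (fun o : Obs 𝒴 D Z => o.1) h
    rw [h3] at h2
    rw [h3, h2] at h1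
    exact ⟨⟨h1, h2⟩, h3⟩
  · rintro ⟨⟨h1, h2⟩, h3⟩
    unfold Tmap
    rw [h3, h2, h1]

lemma Qstar_rationalizes (P : ProbMass (Obs 𝒴 D Z)) (Q0 : ProbMass (Latent 𝒴 D Z))
    (hE0 : Exog Q0) (hR0 : Rationalizes Q0 P)
    {ym yM : ↥𝒴} (hym : ym ≠ yM) {l : D → ℝ} (hl : ∀ d, 0 ≤ l d ∧ l d ≤ 1) :
    Rationalizes (Qstar P Q0 hym hl) P := by
  rintro ⟨y, d, z⟩
  have hL : P.mass (y, d, z)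
      = pr Q0 {ω | ω.1 d = y ∧ ω.2.1 z = d} * pr Q0 {ω | ω.2.2 = z} := by
    rw [hR0 (y, d, z), pr_congr Q0 (A := {ω : Latent 𝒴 D Z | Tmap ω = (y, d, z)})
      (B := {ω : Latent 𝒴 D Z | (ω.1 d = y ∧ ω.2.1 z = d) ∧ ω.2.2 = z}) (Tmap_eq_iff y d z)]
    exact exog_cond_pr hE0 (fun a b => a d = y ∧ b z = d) z
  rw [hL, rationalizes_prZ hR0 z]
  rw [pr_congr (Qstar P Q0 hym hl) (A := {ω : Latent 𝒴 D Z | Tmap ω = (y, d, z)})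
    (B := {ω : Latent 𝒴 D Z | (ω.1 d = y ∧ ω.2.1 z = d) ∧ ω.2.2 = z}) (Tmap_eq_iff y d z)]
  rw [pr_cond (Qstar P Q0 hym hl) (fun ω : Latent 𝒴 D Z => (ω.1 d = y ∧ ω.2.1 z = d) ∧ ω.2.2 = z)]
  symm
  trans (∑ yd : D → ↥𝒴, ∑ dz : Z → D, ∑ z' : Z,
    if ((yd d = y ∧ dz z = d) ∧ z' = z) then QstarMass P Q0 ym yM l (yd, dz, z') else 0)
  · exact sum_triple _
  trans (∑ yd : D → ↥𝒴, ∑ dz : Z → D,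
    if (yd d = y ∧ dz z = d) then QstarMass P Q0 ym yM l (yd, dz, z) else 0)
  · refine Finset.sum_congr rfl fun yd _ => Finset.sum_congr rfl fun dz _ => ?_
    by_cases hc : yd d = y ∧ dz z = d
    · rw [if_pos hc]
      refine Eq.trans (Finset.sum_congr rfl fun z' _ => ?_)
        (sum_ite_iff (fun z' => QstarMass P Q0 ym yM l (yd, dz, z')) z _ (fun z' => Iff.rfl))
      by_cases hz : z' = z
      · rw [if_pos ⟨hc, hz⟩, if_pos hz]
      · rw [if_neg (by tauto), if_neg hz]
    · rw [if_neg hc]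
      exact Finset.sum_eq_zero fun z' _ => if_neg (by tauto)
  rw [Finset.sum_comm]
  trans (∑ dz : Z → D, if dz z = d then prZ P z * nuQ Q0 d y dz else 0)
  · refine Finset.sum_congr rfl fun dz _ => ?_
    by_cases hdz : dz z = d
    · rw [if_pos hdz]
      trans (∑ yd : D → ↥𝒴, (prZ P z * muQ Q0 dz) *
        ((∏ d', kapQ Q0 ym yM l d' dz (yd d')) * (if yd d = y then 1 else 0)))
      · refine Finset.sum_congr rfl fun yd _ => ?_
        by_cases hy : yd d = y
        · rw [if_pos ⟨hy, hdz⟩, if_pos hy]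
          show prZ P z * (muQ Q0 dz * ∏ d', kapQ Q0 ym yM l d' dz (yd d')) = _
          ring
        · rw [if_neg (by tauto), if_neg hy]
          ring
      · rw [← Finset.mul_sum,
          pi_sum_single (fun d' y' => kapQ Q0 ym yM l d' dz y')
            (fun d' => kapQ_sum Q0 hym l d' dz) d (fun y' => if y' = y then (1:ℝ) else 0)]
        have hcol : (∑ y', kapQ Q0 ym yM l d dz y' * (if y' = y then (1:ℝ) else 0))
            = kapQ Q0 ym yM l d dz y := by
          refine Eq.trans (Finset.sum_congr rfl fun y' _ => ?_)
            (sum_ite_iff (fun y' => kapQ Q0 ym yM l d dz y') y _ (fun y' => Iff.rfl))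
          by_cases hy : y' = y
          · rw [if_pos hy, if_pos hy, mul_one]
          · rw [if_neg hy, if_neg hy, mul_zero]
        rw [hcol, mul_assoc, muQ_mul_kapQ_sel Q0 ym yM l ⟨z, hdz⟩ y]
    · rw [if_neg hdz]
      exact Finset.sum_eq_zero fun yd _ => if_neg (by tauto)
  trans (∑ dz : Z → D, prZ P z * (if dz z = d then nuQ Q0 d y dz else 0))
  · refine Finset.sum_congr rfl fun dz _ => ?_
    by_cases hdz : dz z = d
    · rw [if_pos hdz, if_pos hdz]
    · rw [if_neg hdz, if_neg hdz, mul_zero]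
  rw [← Finset.mul_sum, sum_sel_nu_fixed Q0 d y z]
  ring

lemma Qstar_theta (P : ProbMass (Obs 𝒴 D Z)) (Q0 : ProbMass (Latent 𝒴 D Z))
    {ym yM : ↥𝒴} (hym : ym ≠ yM) {l : D → ℝ} (hl : ∀ d, 0 ≤ l d ∧ l d ≤ 1) (d : D) :
    theta (Qstar P Q0 hym hl) d
      = expect Q0 (fun ω => if ∃ z', ω.2.1 z' = d then (ω.1 d : ℝ) else 0)
        + pr Q0 {ω | ¬ ∃ z', ω.2.1 z' = d} * (l d * (yM : ℝ) + (1 - l d) * (ym : ℝ)) := by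
  unfold theta
  rw [expect_eq_triple]
  trans (∑ yd : D → ↥𝒴, ∑ dz : Z → D,
    muQ Q0 dz * ((∏ d', kapQ Q0 ym yM l d' dz (yd d')) * (yd d : ℝ)))
  · refine Finset.sum_congr rfl fun yd _ => Finset.sum_congr rfl fun dz _ => ?_
    trans (∑ z : Z, prZ P z *
      (muQ Q0 dz * ((∏ d', kapQ Q0 ym yM l d' dz (yd d')) * (yd d : ℝ))))
    · refine Finset.sum_congr rfl fun z _ => ?_
      show prZ P z * (muQ Q0 dz * ∏ d', kapQ Q0 ym yM l d' dz (yd d')) * (yd d : ℝ) = _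
      ring
    · rw [← Finset.sum_mul, sum_prZ, one_mul]
  rw [Finset.sum_comm]
  trans (∑ dz : Z → D, if ∃ z', dz z' = d then (∑ y, nuQ Q0 d y dz * (y : ℝ))
    else muQ Q0 dz * (l d * (yM : ℝ) + (1 - l d) * (ym : ℝ)))
  · refine Finset.sum_congr rfl fun dz _ => ?_
    rw [← Finset.mul_sum,
      pi_sum_single (fun d' y' => kapQ Q0 ym yM l d' dz y')
        (fun d' => kapQ_sum Q0 hym l d' dz) d (fun y' => (y' : ℝ))]
    by_cases hsel : ∃ z', dz z' = d
    · rw [if_pos hsel, Finset.mul_sum]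
      refine Finset.sum_congr rfl fun y _ => ?_
      rw [← mul_assoc, muQ_mul_kapQ_sel Q0 ym yM l hsel y]
    · rw [if_neg hsel]
      by_cases hmu : muQ Q0 dz = 0
      · rw [hmu, zero_mul, zero_mul]
      · rw [kapQ_mean_nonsel Q0 hym l hsel hmu]
  trans (∑ dz : Z → D, ((if ∃ z', dz z' = d then (∑ y, nuQ Q0 d y dz * (y : ℝ)) else 0)
    + (if ∃ z', dz z' = d then 0 else muQ Q0 dz) * (l d * (yM : ℝ) + (1 - l d) * (ym : ℝ))))
  · refine Finset.sum_congr rfl fun dz _ => ?_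
    by_cases hsel : ∃ z', dz z' = d
    · rw [if_pos hsel, if_pos hsel, if_pos hsel]
      ring
    · rw [if_neg hsel, if_neg hsel, if_neg hsel]
      ring
  rw [Finset.sum_add_distrib, ← Finset.sum_mul, sum_sel_nu_y, sum_nonsel_mu]

end QstarFacts
section Analysis

open Classical

variable {𝒴 : Finset ℝ} {D Z : Type} [Fintype D] [DecidableEq D] [Fintype Z] [DecidableEq Z]

lemma expect_ite_split {α : Type} [Fintype α] (Q : ProbMass α) (c p : α → Prop)
    [DecidablePred c] [DecidablePred p] (f : α → ℝ) :
    expect Q (fun a => if c a then f a else 0)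
      = expect Q (fun a => if p a ∧ c a then f a else 0)
        + expect Q (fun a => if ¬ p a ∧ c a then f a else 0) := by
  unfold _root_.expect
  rw [← Finset.sum_add_distrib]
  refine Finset.sum_congr rfl fun a _ => ?_
  show Q.mass a * (if c a then f a else 0)
    = Q.mass a * (if p a ∧ c a then f a else 0) + Q.mass a * (if ¬ p a ∧ c a then f a else 0)
  by_cases hc : c a
  · by_cases hp : p a
    · rw [if_pos hc, if_pos ⟨hp, hc⟩, if_neg (fun h => h.1 hp)]
      ring
    · rw [if_pos hc, if_neg (fun h => hp h.1), if_pos ⟨hp, hc⟩]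
      ring
  · rw [if_neg hc, if_neg (fun h => hc h.2), if_neg (fun h => hc h.2)]
    ring

lemma pull_obs {Q : ProbMass (Latent 𝒴 D Z)} {P : ProbMass (Obs 𝒴 D Z)}
    (hR : Rationalizes Q P) (d : D) (z : Z) :
    expect Q (fun ω => if ω.2.1 z = d ∧ ω.2.2 = z then (ω.1 d : ℝ) else 0)
      = expect P (fun o => if o.2.1 = d ∧ o.2.2 = z then (o.1 : ℝ) else 0) := by
  rw [expect_push hR]
  refine expect_congr Q fun ω => ?_
  show (if ω.2.1 z = d ∧ ω.2.2 = z then (ω.1 d : ℝ) else 0)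
    = (if ω.2.1 ω.2.2 = d ∧ ω.2.2 = z then (ω.1 (ω.2.1 ω.2.2) : ℝ) else 0)
  by_cases hz : ω.2.2 = z
  · rw [hz]
    by_cases hd : ω.2.1 z = d
    · rw [hd]
    · rw [if_neg (by tauto), if_neg (by tauto)]
  · rw [if_neg (by tauto), if_neg (by tauto)]

lemma pull_obs_pr {Q : ProbMass (Latent 𝒴 D Z)} {P : ProbMass (Obs 𝒴 D Z)}
    (hR : Rationalizes Q P) (d : D) (z : Z) :
    pr Q {ω | ¬ ω.2.1 z = d ∧ ω.2.2 = z} = pr P {o | ¬ o.2.1 = d ∧ o.2.2 = z} := by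
  rw [pr_push hR]
  refine (pr_congr Q fun ω => ?_).symm
  show (¬ ω.2.1 ω.2.2 = d ∧ ω.2.2 = z) ↔ (¬ ω.2.1 z = d ∧ ω.2.2 = z)
  constructor
  · rintro ⟨h1, h2⟩
    rw [h2] at h1
    exact ⟨h1, h2⟩
  · rintro ⟨h1, h2⟩
    rw [← h2] at h1
    exact ⟨h1, h2⟩

end Analysis
/-- Theorem 3.3, sandwich: if `𝐐 ⊆ 𝐐*_{E,M}` does not restrict potential
outcomes and `𝐐 ⊆ 𝐐' ⊆ 𝐐*_{MI}`, then for any `P` consistent with `𝐐`,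
`Θ₀(P, 𝐐) = Θ₀(P, 𝐐') = Θ₀(P, 𝐐*_{MI})`. -/
theorem sandwich
    (𝒴 : Finset ℝ) (h𝒴 : 2 ≤ 𝒴.card)
    (D Z : Type) [Fintype D] [DecidableEq D] [Nontrivial D]
    [Fintype Z] [DecidableEq Z] [Nontrivial Z]
    (QQ QQ' : Set (ProbMass (Latent 𝒴 D Z)))
    (hsub : ∀ Q ∈ QQ, Exog Q ∧ GenMono Q)
    (hU : UnrestrictedPO QQ)
    (hsub1 : QQ ⊆ QQ')
    (hsub2 : QQ' ⊆ {Q : ProbMass (Latent 𝒴 D Z) | MeanIndep Q})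
    (P : ProbMass (Obs 𝒴 D Z))
    (hP : ∀ z : Z, 0 < prZ P z)
    (hne : (Q0 P QQ).Nonempty) :
    Theta0 P QQ = Theta0 P QQ' ∧
      Theta0 P QQ' = Theta0 P {Q : ProbMass (Latent 𝒴 D Z) | MeanIndep Q} := by
  classical
  -- extreme points of 𝒴
  have h𝒴ne : 𝒴.Nonempty := Finset.card_pos.1 (by omega)
  obtain ⟨ym, yM, hymM, hbound⟩ :
      ∃ ym yM : ↥𝒴, ((ym : ℝ) < (yM : ℝ)) ∧
        ∀ y : ↥𝒴, (ym : ℝ) ≤ (y : ℝ) ∧ (y : ℝ) ≤ (yM : ℝ) := by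
    refine ⟨⟨𝒴.min' h𝒴ne, 𝒴.min'_mem h𝒴ne⟩, ⟨𝒴.max' h𝒴ne, 𝒴.max'_mem h𝒴ne⟩,
      Finset.min'_lt_max'_of_card 𝒴 (by omega),
      fun y => ⟨Finset.min'_le 𝒴 _ y.2, Finset.le_max' 𝒴 _ y.2⟩⟩
  have hym : ym ≠ yM := fun h => absurd (congrArg (fun a : ↥𝒴 => (a : ℝ)) h) (ne_of_lt hymM)
  have key : Theta0 P {Q : ProbMass (Latent 𝒴 D Z) | MeanIndep Q} ⊆ Theta0 P QQ := by
    rintro t ⟨Q', hQ'0, rfl⟩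
    have hMI : MeanIndep Q' := hQ'0.1
    have hR' : Rationalizes Q' P := hQ'0.2
    obtain ⟨Qb, hQb, hRb⟩ := hne
    obtain ⟨hEb, hMb⟩ := hsub Qb hQb
    choose zs hzs using hMb
    -- abbreviations (statement-level)
    have hQz' : ∀ z, pr Q' {ω : Latent 𝒴 D Z | ω.2.2 = z} = prZ P z := rationalizes_prZ hR'
    have hQzb : ∀ z, pr Qb {ω : Latent 𝒴 D Z | ω.2.2 = z} = prZ P z := rationalizes_prZ hRb
    have hpne : ∀ d : D, prZ P (zs d) ≠ 0 := fun d => ne_of_gt (hP (zs d))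
    -- mean independence exploited at zs d
    have hMI' : ∀ d : D,
        (expect Q' fun ω => if ω.2.2 = zs d then (ω.1 d : ℝ) else 0)
          = theta Q' d * prZ P (zs d) := by
      intro d
      have h := hMI d (zs d) (by rw [hQz' (zs d)]; exact hP (zs d))
      rw [hQz' (zs d), div_eq_iff (hpne d)] at h
      exact h
    -- split into treated / untreated parts
    have hsplit : ∀ d : D,
        (expect Q' fun ω => if ω.2.2 = zs d then (ω.1 d : ℝ) else 0)
          = (expect Q' fun ω => if ω.2.1 (zs d) = d ∧ ω.2.2 = zs d then (ω.1 d : ℝ) else 0)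
            + (expect Q' fun ω => if ¬ ω.2.1 (zs d) = d ∧ ω.2.2 = zs d then (ω.1 d : ℝ) else 0) :=
      fun d => expect_ite_split Q' (fun ω => ω.2.2 = zs d) (fun ω => ω.2.1 (zs d) = d)
        (fun ω => (ω.1 d : ℝ))
    -- observed β agrees between Q' and Qb
    have hβ : ∀ d : D,
        (expect Q' fun ω => if ω.2.1 (zs d) = d ∧ ω.2.2 = zs d then (ω.1 d : ℝ) else 0)
          = (expect Qb fun ω => if ω.2.1 (zs d) = d ∧ ω.2.2 = zs d then (ω.1 d : ℝ) else 0) :=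
      fun d => (pull_obs hR' d (zs d)).trans (pull_obs hRb d (zs d)).symm
    -- exogeneity of Qb factorizes β
    have hBb : ∀ d : D,
        (expect Qb fun ω => if ω.2.1 (zs d) = d ∧ ω.2.2 = zs d then (ω.1 d : ℝ) else 0)
          = (expect Qb fun ω => if ω.2.1 (zs d) = d then (ω.1 d : ℝ) else 0) * prZ P (zs d) := by
      intro d
      have h := exog_cond_expect hEb (fun yd dz => if dz (zs d) = d then (yd d : ℝ) else 0) (zs d)
      rw [hQzb (zs d)] at h
      refine Eq.trans (expect_congr Qb fun ω => ?_) h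
      show (if ω.2.1 (zs d) = d ∧ ω.2.2 = zs d then (ω.1 d : ℝ) else 0)
        = (if ω.2.2 = zs d then (if ω.2.1 (zs d) = d then (ω.1 d : ℝ) else 0) else 0)
      by_cases h1 : ω.2.1 (zs d) = d <;> by_cases h2 : ω.2.2 = zs d <;> simp [h1, h2]
    -- exogeneity of Qb factorizes the non-compliance probability
    have hNb : ∀ d : D,
        pr Qb {ω : Latent 𝒴 D Z | ¬ ω.2.1 (zs d) = d ∧ ω.2.2 = zs d}
          = pr Qb {ω : Latent 𝒴 D Z | ¬ ω.2.1 (zs d) = d} * prZ P (zs d) := by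
      intro d
      have h := exog_cond_pr hEb (fun yd dz => ¬ dz (zs d) = d) (zs d)
      rw [hQzb (zs d)] at h
      exact h
    -- non-compliance probabilities agree between Q' and Qb
    have hm' : ∀ d : D,
        pr Q' {ω : Latent 𝒴 D Z | ¬ ω.2.1 (zs d) = d ∧ ω.2.2 = zs d}
          = pr Qb {ω : Latent 𝒴 D Z | ¬ ω.2.1 (zs d) = d ∧ ω.2.2 = zs d} :=
      fun d => (pull_obs_pr hR' d (zs d)).trans (pull_obs_pr hRb d (zs d)).symm
    -- generalized monotonicity: "ever treated" = "treated at zs d" a.s.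
    have hAB : ∀ d : D,
        (expect Qb fun ω => if ∃ z', ω.2.1 z' = d then (ω.1 d : ℝ) else 0)
          = (expect Qb fun ω => if ω.2.1 (zs d) = d then (ω.1 d : ℝ) else 0) := by
      intro d
      unfold _root_.expect
      refine Finset.sum_congr rfl fun ω _ => ?_
      show Qb.mass ω * (if ∃ z', ω.2.1 z' = d then (ω.1 d : ℝ) else 0)
        = Qb.mass ω * (if ω.2.1 (zs d) = d then (ω.1 d : ℝ) else 0)
      by_cases h1 : ω.2.1 (zs d) = d
      · rw [if_pos ⟨zs d, h1⟩, if_pos h1]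
      · by_cases h2 : ∃ z', ω.2.1 z' = d
        · rw [mass_zero_of_pr_zero Qb (hzs d) (show _ ∧ _ from ⟨h1, h2⟩), zero_mul, zero_mul]
        · rw [if_neg h2, if_neg h1]
    have hMN : ∀ d : D,
        pr Qb {ω : Latent 𝒴 D Z | ¬ ∃ z', ω.2.1 z' = d}
          = pr Qb {ω : Latent 𝒴 D Z | ¬ ω.2.1 (zs d) = d} := by
      intro d
      rw [pr_cond Qb (fun ω : Latent 𝒴 D Z => ¬ ∃ z', ω.2.1 z' = d),
        pr_cond Qb (fun ω : Latent 𝒴 D Z => ¬ ω.2.1 (zs d) = d)]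
      refine Finset.sum_congr rfl fun ω _ => ?_
      by_cases h1 : ω.2.1 (zs d) = d
      · rw [if_neg (fun hc => hc ⟨zs d, h1⟩), if_neg (fun hc => hc h1)]
      · by_cases h2 : ∃ z', ω.2.1 z' = d
        · rw [if_neg (fun hc => hc h2), if_pos h1]
          exact (mass_zero_of_pr_zero Qb (hzs d) (show _ ∧ _ from ⟨h1, h2⟩)).symm
        · rw [if_pos h2, if_pos h1]
    -- choose conditional means c d with m d * c d = r d and ym ≤ c d ≤ yM
    have hcex : ∀ d : D, ∃ cd : ℝ, (ym : ℝ) ≤ cd ∧ cd ≤ (yM : ℝ) ∧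
        pr Q' {ω : Latent 𝒴 D Z | ¬ ω.2.1 (zs d) = d ∧ ω.2.2 = zs d} * cd
          = (expect Q' fun ω => if ¬ ω.2.1 (zs d) = d ∧ ω.2.2 = zs d then (ω.1 d : ℝ) else 0) := by
      intro d
      have hrup : (expect Q' fun ω => if ¬ ω.2.1 (zs d) = d ∧ ω.2.2 = zs d then (ω.1 d : ℝ) else 0)
          ≤ (yM : ℝ) * pr Q' {ω : Latent 𝒴 D Z | ¬ ω.2.1 (zs d) = d ∧ ω.2.2 = zs d} := by
        rw [pr_cond Q' (fun ω : Latent 𝒴 D Z => ¬ ω.2.1 (zs d) = d ∧ ω.2.2 = zs d),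
          Finset.mul_sum]
        unfold _root_.expect
        refine Finset.sum_le_sum fun ω _ => ?_
        show Q'.mass ω * (if ¬ ω.2.1 (zs d) = d ∧ ω.2.2 = zs d then (ω.1 d : ℝ) else 0)
          ≤ (yM : ℝ) * (if ¬ ω.2.1 (zs d) = d ∧ ω.2.2 = zs d then Q'.mass ω else 0)
        by_cases hcnd : ¬ ω.2.1 (zs d) = d ∧ ω.2.2 = zs d
        · rw [if_pos hcnd, if_pos hcnd, mul_comm ((yM : ℝ))]
          exact mul_le_mul_of_nonneg_left (hbound (ω.1 d)).2 (Q'.nonneg ω)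
        · rw [if_neg hcnd, if_neg hcnd, mul_zero, mul_zero]
      have hrlo : (ym : ℝ) * pr Q' {ω : Latent 𝒴 D Z | ¬ ω.2.1 (zs d) = d ∧ ω.2.2 = zs d}
          ≤ (expect Q' fun ω => if ¬ ω.2.1 (zs d) = d ∧ ω.2.2 = zs d then (ω.1 d : ℝ) else 0) := by
        rw [pr_cond Q' (fun ω : Latent 𝒴 D Z => ¬ ω.2.1 (zs d) = d ∧ ω.2.2 = zs d),
          Finset.mul_sum]
        unfold _root_.expect
        refine Finset.sum_le_sum fun ω _ => ?_
        show (ym : ℝ) * (if ¬ ω.2.1 (zs d) = d ∧ ω.2.2 = zs d then Q'.mass ω else 0)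
          ≤ Q'.mass ω * (if ¬ ω.2.1 (zs d) = d ∧ ω.2.2 = zs d then (ω.1 d : ℝ) else 0)
        by_cases hcnd : ¬ ω.2.1 (zs d) = d ∧ ω.2.2 = zs d
        · rw [if_pos hcnd, if_pos hcnd, mul_comm ((ym : ℝ))]
          exact mul_le_mul_of_nonneg_left (hbound (ω.1 d)).1 (Q'.nonneg ω)
        · rw [if_neg hcnd, if_neg hcnd, mul_zero, mul_zero]
      by_cases hm0 : pr Q' {ω : Latent 𝒴 D Z | ¬ ω.2.1 (zs d) = d ∧ ω.2.2 = zs d} = 0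
      · refine ⟨(ym : ℝ), le_refl _, le_of_lt hymM, ?_⟩
        rw [hm0, zero_mul]
        symm
        unfold _root_.expect
        refine Finset.sum_eq_zero fun ω _ => ?_
        show Q'.mass ω * (if ¬ ω.2.1 (zs d) = d ∧ ω.2.2 = zs d then (ω.1 d : ℝ) else 0) = 0
        by_cases hcnd : ¬ ω.2.1 (zs d) = d ∧ ω.2.2 = zs d
        · rw [mass_zero_of_pr_zero Q' hm0 hcnd, zero_mul]
        · rw [if_neg hcnd, mul_zero]
      · have hmpos : 0 < pr Q' {ω : Latent 𝒴 D Z | ¬ ω.2.1 (zs d) = d ∧ ω.2.2 = zs d} :=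
          lt_of_le_of_ne (pr_nonneg _ _) (Ne.symm hm0)
        refine ⟨(expect Q' fun ω => if ¬ ω.2.1 (zs d) = d ∧ ω.2.2 = zs d then (ω.1 d : ℝ) else 0)
          / pr Q' {ω : Latent 𝒴 D Z | ¬ ω.2.1 (zs d) = d ∧ ω.2.2 = zs d}, ?_, ?_, ?_⟩
        · rw [le_div_iff₀ hmpos]
          exact hrlo
        · rw [div_le_iff₀ hmpos]
          linarith [hrup]
        · rw [mul_comm, div_mul_cancel₀ _ hm0]
    choose c hc1 hc2 hc3 using hcex
    -- the mixing weights
    have hdpos : (0:ℝ) < (yM : ℝ) - (ym : ℝ) := by linarith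
    have hl : ∀ d : D, 0 ≤ (c d - (ym : ℝ)) / ((yM : ℝ) - (ym : ℝ))
        ∧ (c d - (ym : ℝ)) / ((yM : ℝ) - (ym : ℝ)) ≤ 1 := by
      intro d
      constructor
      · exact div_nonneg (by linarith [hc1 d]) (le_of_lt hdpos)
      · rw [div_le_one hdpos]
        linarith [hc2 d]
    have hcval : ∀ d : D,
        ((c d - (ym : ℝ)) / ((yM : ℝ) - (ym : ℝ))) * (yM : ℝ)
          + (1 - (c d - (ym : ℝ)) / ((yM : ℝ) - (ym : ℝ))) * (ym : ℝ) = c d := by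
      intro d
      have hld : ((c d - (ym : ℝ)) / ((yM : ℝ) - (ym : ℝ))) * ((yM : ℝ) - (ym : ℝ))
          = c d - (ym : ℝ) := div_mul_cancel₀ _ (ne_of_gt hdpos)
      have hexp : ((c d - (ym : ℝ)) / ((yM : ℝ) - (ym : ℝ))) * (yM : ℝ)
          + (1 - (c d - (ym : ℝ)) / ((yM : ℝ) - (ym : ℝ))) * (ym : ℝ)
          = (ym : ℝ) + ((c d - (ym : ℝ)) / ((yM : ℝ) - (ym : ℝ))) * ((yM : ℝ) - (ym : ℝ)) := by
        ring
      rw [hexp, hld]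
      ring
    -- the constructed distribution
    refine ⟨Qstar P Qb hym hl, ⟨?_, Qstar_rationalizes P Qb hEb hRb hym hl⟩, ?_⟩
    · refine hU Qb hQb _ (Qstar_exog P Qb hym hl) fun dz => ?_
      rw [Qstar_margdz P Qb hym hl dz]
      rfl
    · funext d
      rw [Qstar_theta P Qb hym hl d, hAB d, hMN d, hcval d]
      -- target : B d + pr Qb {¬=} * c d = theta Q' d
      have hMc : pr Qb {ω : Latent 𝒴 D Z | ¬ ω.2.1 (zs d) = d} * c d
          = (expect Q' fun ω => if ¬ ω.2.1 (zs d) = d ∧ ω.2.2 = zs d then (ω.1 d : ℝ) else 0)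
            / prZ P (zs d) := by
        apply mul_right_cancel₀ (hpne d)
        rw [div_mul_cancel₀ _ (hpne d)]
        calc pr Qb {ω : Latent 𝒴 D Z | ¬ ω.2.1 (zs d) = d} * c d * prZ P (zs d)
            = (pr Qb {ω : Latent 𝒴 D Z | ¬ ω.2.1 (zs d) = d} * prZ P (zs d)) * c d := by ring
          _ = pr Q' {ω : Latent 𝒴 D Z | ¬ ω.2.1 (zs d) = d ∧ ω.2.2 = zs d} * c d := by
              rw [← hNb d, ← hm' d]
          _ = _ := hc3 d
      rw [hMc]
      -- now use the MI chain
      have hth : theta Q' d * prZ P (zs d)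
          = (expect Qb fun ω => if ω.2.1 (zs d) = d then (ω.1 d : ℝ) else 0) * prZ P (zs d)
            + (expect Q' fun ω => if ¬ ω.2.1 (zs d) = d ∧ ω.2.2 = zs d then (ω.1 d : ℝ) else 0) := by
        rw [← hMI' d, hsplit d, hβ d, hBb d]
      apply mul_right_cancel₀ (hpne d)
      rw [add_mul, div_mul_cancel₀ _ (hpne d)]
      exact hth.symm
  -- assemble the three identified sets
  have hQ01 : Q0 P QQ ⊆ Q0 P QQ' := fun Q hQ => ⟨hsub1 hQ.1, hQ.2⟩
  have hQ02 : Q0 P QQ' ⊆ Q0 P {Q : ProbMass (Latent 𝒴 D Z) | MeanIndep Q} :=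
    fun Q hQ => ⟨hsub2 hQ.1, hQ.2⟩
  have h1 : Theta0 P QQ ⊆ Theta0 P QQ' := Set.image_mono hQ01
  have h2 : Theta0 P QQ' ⊆ Theta0 P {Q : ProbMass (Latent 𝒴 D Z) | MeanIndep Q} :=
    Set.image_mono hQ02
  exact ⟨Set.Subset.antisymm h1 (fun t ht => key (h2 ht)),
    Set.Subset.antisymm h2 (fun t ht => h1 (key ht))⟩
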